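/- Let A be a unital complex Banach algebra with ‖1‖ = 1 and let a ∈ A be dissipative, i.e., Re ρ(a) ≤ 0 for all states ρ. Then ‖1 + t·a‖ ≤ 1 + t²‖a‖² for all t ≥ 0. -/

import Mathlib

/-- A state on a unital Banach algebra: a continuous linear functional `ρ`
with `‖ρ‖ = 1` and `ρ 1 = 1`. -/
def IsState {A : Type*} [NormedRing A] [NormedAlgebra ℂ A] (ρ : A →L[ℂ] ℂ) : Prop :=
  ‖ρ‖ = 1 ∧ ρ 1 = 1

/-- An element is dissipative if `Re ρ(a) ≤ 0` for all states `ρ`. -/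
def IsDissipative {A : Type*} [NormedRing A] [NormedAlgebra ℂ A] (a : A) : Prop :=
  ∀ ρ : A →L[ℂ] ℂ, IsState ρ → (ρ a).re ≤ 0

section Aux
variable {A : Type*} [NormedRing A] [NormedAlgebra ℂ A] [NormOneClass A]

/-- Key inequality: if `a` is dissipative then `‖x‖ ≤ ‖(1-a)x‖` for all `x`. -/
lemma key_ineq (a : A) (ha : IsDissipative a) (x : A) :
    ‖x‖ ≤ ‖x - a * x‖ := by
  rcases eq_or_ne x 0 with rfl | hx
  · simp
  obtain ⟨f, hf1, hfx⟩ := exists_dual_vector ℂ x (norm_ne_zero_iff.mpr hx)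
  have hx0 : (0:ℝ) < ‖x‖ := norm_pos_iff.mpr hx
  set ρ : A →L[ℂ] ℂ :=
    ((‖x‖ : ℂ))⁻¹ • (f.comp ((ContinuousLinearMap.mul ℂ A).flip x)) with hρ
  have hρapp : ∀ b, ρ b = (‖x‖ : ℂ)⁻¹ * f (b * x) := fun b => rfl
  have hρ1 : ρ 1 = 1 := by
    rw [hρapp, one_mul, hfx]
    exact inv_mul_cancel₀ (by exact_mod_cast hx0.ne')
  have hρle : ‖ρ‖ ≤ 1 := by
    apply ContinuousLinearMap.opNorm_le_bound _ zero_le_one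
    intro b
    rw [hρapp, norm_mul]
    have h1 : ‖f (b * x)‖ ≤ ‖b‖ * ‖x‖ := by
      calc ‖f (b * x)‖ ≤ ‖f‖ * ‖b * x‖ := f.le_opNorm _
        _ = ‖b * x‖ := by rw [hf1, one_mul]
        _ ≤ ‖b‖ * ‖x‖ := norm_mul_le _ _
    have h2 : ‖((‖x‖ : ℂ))⁻¹‖ = (‖x‖)⁻¹ := by
      rw [norm_inv, Complex.norm_real, Real.norm_of_nonneg hx0.le]
    rw [h2]
    calc (‖x‖)⁻¹ * ‖f (b * x)‖ ≤ (‖x‖)⁻¹ * (‖b‖ * ‖x‖) := by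
          exact mul_le_mul_of_nonneg_left h1 (by positivity)
      _ = 1 * ‖b‖ := by field_simp
  have hρnorm : ‖ρ‖ = 1 := by
    refine le_antisymm hρle ?_
    have h := ρ.le_opNorm 1
    rw [hρ1, norm_one, norm_one, mul_one] at h
    exact h
  have hre : (ρ a).re ≤ 0 := ha ρ ⟨hρnorm, hρ1⟩
  have hfa : (f (a * x)).re ≤ 0 := by
    rw [hρapp] at hre
    have : ((‖x‖ : ℂ)⁻¹ * f (a * x)).re = (‖x‖)⁻¹ * (f (a * x)).re := by
      rw [← Complex.ofReal_inv, Complex.re_ofReal_mul]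
    rw [this] at hre
    nlinarith [inv_pos.mpr hx0]
  have h1 : (f (x - a * x)).re ≥ ‖x‖ := by
    have hr : (f x).re = ‖x‖ := by rw [hfx]; simp
    rw [map_sub, Complex.sub_re, hr]
    linarith
  calc ‖x‖ ≤ (f (x - a * x)).re := h1
    _ ≤ ‖f (x - a * x)‖ := Complex.re_le_norm _
    _ ≤ ‖f‖ * ‖x - a * x‖ := f.le_opNorm _
    _ = ‖x - a * x‖ := by rw [hf1, one_mul]

lemma dissipative_smul (a : A) (ha : IsDissipative a) {s : ℝ} (hs : 0 ≤ s) :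
    IsDissipative ((s : ℂ) • a) := by
  intro ρ hρ
  have := ha ρ hρ
  rw [map_smul, smul_eq_mul, Complex.re_ofReal_mul]
  exact mul_nonpos_of_nonneg_of_nonpos hs this

/-- Norm bound on the inverse. -/
lemma inv_norm_le (a : A) (ha : IsDissipative a) {s : ℝ} (hs : 0 ≤ s) (u : Aˣ)
    (hu : (u : A) = 1 - (s : ℂ) • a) : ‖((u⁻¹ : Aˣ) : A)‖ ≤ 1 := by
  have key := key_ineq ((s : ℂ) • a) (dissipative_smul a ha hs) ((u⁻¹ : Aˣ) : A)
  have : (↑(u⁻¹ : Aˣ) : A) - (s : ℂ) • a * ↑(u⁻¹ : Aˣ) = 1 := by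
    have := u.mul_inv
    rw [hu] at this
    rw [← this, sub_mul, one_mul]
  rw [this] at key
  simpa using key

lemma isUnit_one_sub [CompleteSpace A] (a : A) (ha : IsDissipative a) {s : ℝ} (hs : 0 ≤ s) :
    IsUnit (1 - (s : ℂ) • a) := by
  rcases eq_or_ne a 0 with rfl | ha0
  · simp
  have hna : (0:ℝ) < ‖a‖ := norm_pos_iff.mpr ha0
  set δ : ℝ := (2 * ‖a‖)⁻¹ with hδ
  have hδpos : 0 < δ := by positivity
  have main : ∀ n : ℕ, ∀ s : ℝ, 0 ≤ s → s ≤ n * δ → IsUnit (1 - (s : ℂ) • a) := by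
    intro n
    induction n with
    | zero =>
      intro s hs hs'
      have : s = 0 := le_antisymm (by simpa using hs') hs
      simp [this]
    | succ n ih =>
      intro s hs hs'
      rcases le_or_gt s (n * δ) with h | h
      · exact ih s hs h
      · set s₀ : ℝ := n * δ with hs₀
        have hs₀nn : 0 ≤ s₀ := by positivity
        obtain ⟨u, hu⟩ := ih s₀ hs₀nn le_rfl
        have hinv : ‖((u⁻¹ : Aˣ) : A)‖ ≤ 1 := inv_norm_le a ha hs₀nn u hu
        have hdiff : s - s₀ ≤ δ := by
          push_cast at hs'
          linarith
        have hsmall : ‖((s - s₀ : ℝ) : ℂ) • (((u⁻¹ : Aˣ) : A) * a)‖ < 1 := by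
          rw [norm_smul, Complex.norm_real, Real.norm_of_nonneg (by linarith)]
          have h1 : ‖((u⁻¹ : Aˣ) : A) * a‖ ≤ ‖a‖ :=
            le_trans (norm_mul_le _ _) (by nlinarith [norm_nonneg a])
          have h2 : (s - s₀) * ‖((u⁻¹ : Aˣ) : A) * a‖ ≤ δ * ‖a‖ := by
            apply mul_le_mul hdiff h1 (norm_nonneg _) hδpos.le
          have h3 : δ * ‖a‖ = 1 / 2 := by
            rw [hδ]; field_simp
          linarith
        have hv : IsUnit (1 - ((s - s₀ : ℝ) : ℂ) • (((u⁻¹ : Aˣ) : A) * a)) :=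
          (Units.oneSub _ hsmall).isUnit
        have factor : (1 : A) - (s : ℂ) • a
            = (u : A) * (1 - ((s - s₀ : ℝ) : ℂ) • (((u⁻¹ : Aˣ) : A) * a)) := by
          have hmid : (u : A) * (((s - s₀ : ℝ) : ℂ) • (((u⁻¹ : Aˣ) : A) * a))
              = ((s - s₀ : ℝ) : ℂ) • a := by
            rw [mul_smul_comm, ← mul_assoc, u.mul_inv, one_mul]
          rw [mul_sub, mul_one, hmid, hu]
          have hsplit : ((s : ℝ) : ℂ) • a = ((s₀ : ℝ) : ℂ) • a + ((s - s₀ : ℝ) : ℂ) • a := by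
            rw [← add_smul]
            congr 1
            push_cast
            ring
          rw [hsplit]
          abel
        rw [factor]
        exact u.isUnit.mul hv
  obtain ⟨n, hn⟩ := exists_nat_ge (s / δ)
  exact main n s hs (by rw [div_le_iff₀ hδpos] at hn; linarith)

end Aux

theorem stmt1 {A : Type*} [NormedRing A] [NormedAlgebra ℂ A] [NormOneClass A]
    [CompleteSpace A] (a : A) (ha : IsDissipative a) :
    ∀ t : ℝ, 0 ≤ t → ‖1 + (t : ℂ) • a‖ ≤ 1 + t ^ 2 * ‖a‖ ^ 2 := by
  intro t ht
  set b : A := (t : ℂ) • a with hb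
  obtain ⟨u, hu⟩ := isUnit_one_sub a ha ht
  have hinv : ‖((u⁻¹ : Aˣ) : A)‖ ≤ 1 := inv_norm_le a ha ht u hu
  have factor : (1 : A) + b = ((u⁻¹ : Aˣ) : A) * (1 - b * b) := by
    have h1 : (u : A) * (1 + b) = 1 - b * b := by
      rw [hu, ← hb, sub_mul, one_mul, mul_add, mul_one]
      abel
    calc (1 : A) + b = (((u⁻¹ : Aˣ) : A) * (u : A)) * (1 + b) := by rw [u.inv_mul, one_mul]
      _ = ((u⁻¹ : Aˣ) : A) * (1 - b * b) := by rw [mul_assoc, h1]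
  have hbnorm : ‖b‖ = t * ‖a‖ := by
    rw [hb, norm_smul, Complex.norm_real, Real.norm_of_nonneg ht]
  calc ‖(1 : A) + b‖ = ‖((u⁻¹ : Aˣ) : A) * (1 - b * b)‖ := by rw [factor]
    _ ≤ ‖((u⁻¹ : Aˣ) : A)‖ * ‖1 - b * b‖ := norm_mul_le _ _
    _ ≤ 1 * ‖1 - b * b‖ := by
        exact mul_le_mul_of_nonneg_right hinv (norm_nonneg _)
    _ = ‖1 - b * b‖ := one_mul _
    _ ≤ ‖(1 : A)‖ + ‖b * b‖ := norm_sub_le _ _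
    _ ≤ 1 + ‖b‖ * ‖b‖ := by rw [norm_one]; gcongr; exact norm_mul_le _ _
    _ = 1 + t ^ 2 * ‖a‖ ^ 2 := by rw [hbnorm]; ring
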